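/- Let x₁, x₂, x₃ ∈ ℂ[[t^{-1/6}]] be three distinct solutions of a cubic equation b₀ + b₁x + b₂x² + b₃x³ = 0 with polynomial coefficients, with deg x₁ ≥ 1 and deg x₂, deg x₃ ≤ 0 (degree meaning the order of the pole at infinity). Then x₁ is the only solution of the associated Riccati differential equation D x' = A + B x + C x² having degree ≥ 1. -/

import Mathlib

open Polynomial

/-- The formal derivative (with respect to `X`) of a formal Laurent series. -/
noncomputable def lsDeriv {F : Type*} [Field F] (f : LaurentSeries F) : LaurentSeries F where
  coeff n := (n + 1 : ℤ) * f.coeff (n + 1)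
  isPWO_support' := by
    refine ((HahnSeries.single (-1 : ℤ) (1 : F) * f).isPWO_support).mono ?_
    intro n hn
    have hf : f.coeff (n + 1) ≠ 0 := by
      intro h
      apply hn
      simp [h]
    have hcoeff : (HahnSeries.single (-1 : ℤ) (1 : F) * f).coeff n = f.coeff (n + 1) := by
      have := HahnSeries.coeff_single_mul_add (r := (1 : F)) (x := f) (b := (-1 : ℤ)) (a := n + 1)
      simpa using this
    simp only [HahnSeries.mem_support, hcoeff]
    exact hf

variable {F : Type*} [Field F]

lemma lsDeriv_coeff (f : LaurentSeries F) (n : ℤ) :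
    (lsDeriv f).coeff n = (n + 1 : ℤ) * f.coeff (n + 1) := rfl

/-- Euler operator -/
noncomputable def eul (f : LaurentSeries F) : LaurentSeries F where
  coeff n := (n : ℤ) * f.coeff n
  isPWO_support' := f.isPWO_support.mono (by
    intro n hn
    simp only [Function.mem_support] at hn ⊢
    intro h; apply hn; simp [h])

lemma eul_coeff (f : LaurentSeries F) (n : ℤ) : (eul f).coeff n = (n : ℤ) * f.coeff n := rfl

lemma eul_support_subset (f : LaurentSeries F) : (eul f).support ⊆ f.support := by
  intro n hn
  simp only [HahnSeries.mem_support, eul_coeff] at hn ⊢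
  intro h; apply hn; rw [h, mul_zero]

lemma eul_mul (f g : LaurentSeries F) : eul (f * g) = eul f * g + f * eul g := by
  ext n
  rw [HahnSeries.coeff_add, eul_coeff,
    HahnSeries.coeff_mul_left' f.isPWO_support (eul_support_subset f),
    HahnSeries.coeff_mul_right' g.isPWO_support (eul_support_subset g),
    HahnSeries.coeff_mul, Finset.mul_sum, ← Finset.sum_add_distrib]
  refine Finset.sum_congr rfl ?_
  intro ij hij
  rw [Finset.mem_addAntidiagonal] at hij
  rw [eul_coeff, eul_coeff, ← hij.2.2]
  push_cast
  ring

lemma lsDeriv_eq (f : LaurentSeries F) :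
    lsDeriv f = HahnSeries.single (-1 : ℤ) (1 : F) * eul f := by
  ext n
  have := HahnSeries.coeff_single_mul_add (r := (1 : F)) (x := eul f) (b := (-1 : ℤ)) (a := n + 1)
  rw [show n + 1 + (-1 : ℤ) = n by ring] at this
  rw [lsDeriv_coeff, this, one_mul, eul_coeff]

lemma lsDeriv_mul (f g : LaurentSeries F) :
    lsDeriv (f * g) = lsDeriv f * g + f * lsDeriv g := by
  rw [lsDeriv_eq, lsDeriv_eq, lsDeriv_eq, eul_mul, mul_add]
  ring

lemma lsDeriv_add (f g : LaurentSeries F) : lsDeriv (f + g) = lsDeriv f + lsDeriv g := by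
  ext n
  simp [lsDeriv_coeff, HahnSeries.coeff_add, mul_add]

lemma lsDeriv_single (m : ℤ) (c : F) :
    lsDeriv (HahnSeries.single m c) = HahnSeries.single (m - 1) ((m : F) * c) := by
  ext n
  rw [lsDeriv_coeff]
  by_cases h : n = m - 1
  · subst h
    rw [HahnSeries.coeff_single_same]
    rw [show m - 1 + 1 = m by ring, HahnSeries.coeff_single_same]
  · rw [HahnSeries.coeff_single_of_ne h, HahnSeries.coeff_single_of_ne (by omega), mul_zero]

lemma lsDeriv_sub (f g : LaurentSeries F) : lsDeriv (f - g) = lsDeriv f - lsDeriv g := by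
  ext n
  simp [lsDeriv_coeff, HahnSeries.coeff_sub, mul_sub]


/-- We model `ℂ[[t^{-1/6}]]` (and its fraction field) by the field of formal Laurent series
`ℂ((X))` in the variable `X = t^{-1/6}`.  In this model `t = X⁻⁶`. -/
noncomputable def pT : LaurentSeries ℂ := HahnSeries.single (-6 : ℤ) 1

/-- The formal derivative with respect to `t` on `ℂ((t^{-1/6}))`: since `X = t^{-1/6}`,
`dX/dt = -(1/6)·t^{-7/6} = -(1/6)·X⁷`, so `d/dt = -(1/6)·X⁷·d/dX`. -/
noncomputable def tDeriv6 (f : LaurentSeries ℂ) : LaurentSeries ℂ :=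
  HahnSeries.single (7 : ℤ) (-(6 : ℂ)⁻¹) * lsDeriv f

lemma tDeriv6_add (f g : LaurentSeries ℂ) : tDeriv6 (f + g) = tDeriv6 f + tDeriv6 g := by
  rw [tDeriv6, tDeriv6, tDeriv6, lsDeriv_add, mul_add]

lemma tDeriv6_sub (f g : LaurentSeries ℂ) : tDeriv6 (f - g) = tDeriv6 f - tDeriv6 g := by
  rw [tDeriv6, tDeriv6, tDeriv6, lsDeriv_sub, mul_sub]

lemma tDeriv6_mul (f g : LaurentSeries ℂ) :
    tDeriv6 (f * g) = tDeriv6 f * g + f * tDeriv6 g := by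
  simp only [tDeriv6, lsDeriv_mul, mul_add]
  ring

lemma tDeriv6_eq_zero {f : LaurentSeries ℂ} (h : tDeriv6 f = 0) :
    f = HahnSeries.single (0 : ℤ) (f.coeff 0) := by
  have h1 : lsDeriv f = 0 := by
    rcases mul_eq_zero.mp h with h' | h'
    · exfalso
      have := HahnSeries.coeff_single_same (7 : ℤ) (-(6 : ℂ)⁻¹)
      rw [h'] at this
      simp at this
    · exact h'
  ext n
  by_cases hn : n = 0
  · subst hn; rw [HahnSeries.coeff_single_same]
  · rw [HahnSeries.coeff_single_of_ne hn]
    have := congrArg (fun g => HahnSeries.coeff g (n - 1)) h1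
    simp only [lsDeriv_coeff, HahnSeries.coeff_zero] at this
    rw [show n - 1 + 1 = n by ring] at this
    rcases mul_eq_zero.mp this with h' | h'
    · exact absurd (by exact_mod_cast h') hn
    · exact h'

lemma aeval_pT_monomial (i : ℕ) (a : ℂ) :
    aeval pT (monomial i a) = HahnSeries.single (-(6 * (i : ℤ))) a := by
  rw [aeval_monomial, pT, HahnSeries.single_pow]
  have : algebraMap ℂ (LaurentSeries ℂ) a = HahnSeries.single (0 : ℤ) a := by
    rw [HahnSeries.algebraMap_apply', PowerSeries.algebraMap_apply, Algebra.algebraMap_self_apply,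
      HahnSeries.ofPowerSeries_C, HahnSeries.C_apply]
  rw [this, HahnSeries.single_mul_single, one_pow, mul_one, zero_add]
  congr 1
  simp [nsmul_eq_mul]
  ring

lemma aeval_pT_coeff (p : ℂ[X]) (k : ℕ) :
    (aeval pT p).coeff (-(6 * (k : ℤ))) = p.coeff k := by
  induction p using Polynomial.induction_on' with
  | add p q hp hq => rw [map_add, HahnSeries.coeff_add, hp, hq, coeff_add]
  | monomial i a =>
      rw [aeval_pT_monomial, coeff_monomial]
      by_cases h : i = k
      · subst h; rw [HahnSeries.coeff_single_same, if_pos rfl]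
      · rw [HahnSeries.coeff_single_of_ne (by omega), if_neg (by omega)]

lemma aeval_pT_ne_zero {p : ℂ[X]} (hp : p ≠ 0) : aeval pT p ≠ 0 := by
  intro h
  apply hp
  ext k
  have := aeval_pT_coeff p k
  rw [h] at this
  simpa using this.symm

lemma tDeriv6_aeval (p : ℂ[X]) : tDeriv6 (aeval pT p) = aeval pT (derivative p) := by
  induction p using Polynomial.induction_on' with
  | add p q hp hq => rw [map_add, tDeriv6_add, hp, hq, derivative_add, map_add]
  | monomial i a =>
      rw [aeval_pT_monomial, derivative_monomial, tDeriv6, lsDeriv_single,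
        HahnSeries.single_mul_single, aeval_pT_monomial]
      by_cases h : i = 0
      · subst h
        simp
      · congr 1
        · push_cast [Nat.cast_sub (by omega : 1 ≤ i)]
          ring
        · push_cast
          field_simp

lemma tDeriv6_zero : tDeriv6 (0 : LaurentSeries ℂ) = 0 := by
  have h : lsDeriv (0 : LaurentSeries ℂ) = 0 := by
    ext n; simp [lsDeriv_coeff]
  rw [tDeriv6, h, mul_zero]

lemma tDeriv6_sq (f : LaurentSeries ℂ) : tDeriv6 (f ^ 2) = 2 * f * tDeriv6 f := by
  rw [pow_two, tDeriv6_mul]; ring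

lemma tDeriv6_cube (f : LaurentSeries ℂ) : tDeriv6 (f ^ 3) = 3 * f ^ 2 * tDeriv6 f := by
  rw [pow_succ, tDeriv6_mul, tDeriv6_sq, pow_two]; ring


/-- `z` solves the Riccati equation `D z' = A + B z + C z²` associated (as in
Proposition 1) with the cubic `b₃x³ + b₂x² + b₁x + b₀ = 0`; since
`A = (1/b₃)·det(...)` and `B = (1/b₃)·det(...)`, the equation is stated multiplied
through by `b₃`. -/
noncomputable def SolvesRiccati (b₀ b₁ b₂ b₃ : Polynomial ℂ) (z : LaurentSeries ℂ) : Prop :=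
  aeval pT b₃ *
      (aeval pT (4 * b₃ * b₁ ^ 3 + 4 * b₂ ^ 3 * b₀ + 27 * b₃ ^ 2 * b₀ ^ 2
          - b₂ ^ 2 * b₁ ^ 2 - 18 * b₃ * b₂ * b₁ * b₀) * tDeriv6 z) =
    aeval pT (Matrix.det
        !![b₀ * derivative b₃ - b₃ * derivative b₀, -3 * b₀, b₂ * b₀;
           b₁ * derivative b₃ - b₃ * derivative b₁, -2 * b₁, b₂ * b₁ - 3 * b₃ * b₀;
           b₂ * derivative b₃ - b₃ * derivative b₂, -b₂, b₂ ^ 2 - 2 * b₃ * b₁]) +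
    aeval pT (Matrix.det
        !![b₁, b₀ * derivative b₃ - b₃ * derivative b₀, b₂ * b₀;
           2 * b₂, b₁ * derivative b₃ - b₃ * derivative b₁, b₂ * b₁ - 3 * b₃ * b₀;
           3 * b₃, b₂ * derivative b₃ - b₃ * derivative b₂, b₂ ^ 2 - 2 * b₃ * b₁]) * z +
    aeval pT b₃ * aeval pT (Matrix.det
        !![b₁, -3 * b₀, b₀ * derivative b₃ - b₃ * derivative b₀;
           2 * b₂, -2 * b₁, b₁ * derivative b₃ - b₃ * derivative b₁;
           3 * b₃, -b₂, b₂ * derivative b₃ - b₃ * derivative b₂]) * z ^ 2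

set_option maxHeartbeats 2000000 in
lemma solves_of_root (b₀ b₁ b₂ b₃ : Polynomial ℂ) (z : LaurentSeries ℂ)
    (hz : aeval pT b₀ + aeval pT b₁ * z + aeval pT b₂ * z ^ 2 + aeval pT b₃ * z ^ 3 = 0)
    (hU : aeval pT b₁ + 2 * aeval pT b₂ * z + 3 * aeval pT b₃ * z ^ 2 ≠ 0) :
    SolvesRiccati b₀ b₁ b₂ b₃ z := by
  have h1 := congrArg tDeriv6 hz
  simp only [tDeriv6_add, tDeriv6_mul, tDeriv6_sq, tDeriv6_cube, tDeriv6_aeval,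
    tDeriv6_zero] at h1
  unfold SolvesRiccati
  simp only [Matrix.det_fin_three, Matrix.of_apply, Matrix.cons_val', Matrix.cons_val_zero, Matrix.cons_val_one,
    Matrix.head_cons, Matrix.empty_val', Matrix.cons_val_fin_one, Matrix.head_fin_const,
    Matrix.cons_val_two, Matrix.tail_cons, map_add, map_sub, map_mul, map_pow, map_neg,
    map_ofNat, map_one]
  apply mul_right_cancel₀ hU
  linear_combination (aeval pT b₃ * ((4:LaurentSeries ℂ)*(aeval pT b₃)*(aeval pT b₁)^3
      + (4:LaurentSeries ℂ)*(aeval pT b₂)^3*(aeval pT b₀)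
      + (27:LaurentSeries ℂ)*(aeval pT b₃)^2*(aeval pT b₀)^2
      - (aeval pT b₂)^2*(aeval pT b₁)^2
      - (18:LaurentSeries ℂ)*(aeval pT b₃)*(aeval pT b₂)*(aeval pT b₁)*(aeval pT b₀))) * h1
    + ((-4:LaurentSeries ℂ)*(aeval pT b₂)^3*(aeval pT b₃)*(aeval pT (derivative b₀)) + (15:LaurentSeries ℂ)*(aeval pT b₁)*(aeval pT b₂)*(aeval pT b₃)^2*(aeval pT (derivative b₀)) + (2:LaurentSeries ℂ)*(aeval pT b₁)*(aeval pT b₂)^2*(aeval pT b₃)*(aeval pT (derivative b₁)) + (-6:LaurentSeries ℂ)*(aeval pT b₁)^2*(aeval pT b₃)^2*(aeval pT (derivative b₁)) + (-1:LaurentSeries ℂ)*(aeval pT b₁)^2*(aeval pT b₂)*(aeval pT b₃)*(aeval pT (derivative b₂)) + (2:LaurentSeries ℂ)*(aeval pT b₁)^3*(aeval pT b₃)*(aeval pT (derivative b₃)) + (-27:LaurentSeries ℂ)*(aeval pT b₀)*(aeval pT b₃)^3*(aeval pT (derivative b₀)) + (9:LaurentSeries ℂ)*(aeval pT b₀)*(aeval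 pT b₁)*(aeval pT b₃)^2*(aeval pT (derivative b₂)) + (-6:LaurentSeries ℂ)*(aeval pT b₀)*(aeval pT b₁)*(aeval pT b₂)*(aeval pT b₃)*(aeval pT (derivative b₃)) + ((-6:LaurentSeries ℂ)*(aeval pT b₂)^2*(aeval pT b₃)^2*(aeval pT (derivative b₀)) + (18:LaurentSeries ℂ)*(aeval pT b₁)*(aeval pT b₃)^3*(aeval pT (derivative b₀)) + (3:LaurentSeries ℂ)*(aeval pT b₁)*(aeval pT b₂)*(aeval pT b₃)^2*(aeval pT (derivative b₁)) + (-6:LaurentSeries ℂ)*(aeval pT b₁)^2*(aeval pT b₃)^2*(aeval pT (derivative b₂)) + (3:LaurentSeries ℂ)*(aeval pT b₁)^2*(aeval pT b₂)*(aeval pT b₃)*(aeval pT (derivative b₃)) + (-27:LaurentSeries ℂ)*(aeval pT b₀)*(aeval pT b₃)^3*(aeval pT (derivative b₁)) + (18:LaurentSeries ℂ)*(aeval pT b₀)*(aeval pT b₂)*(aeval pT b₃)^2*(aeval pT (derivative b₂)) + (-12:LaurentSeries ℂ)*(aeval pT b₀)*(aeval pT b₂)^2*(aeval pT b₃)*(aeval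 pT (derivative b₃)) + (9:LaurentSeries ℂ)*(aeval pT b₀)*(aeval pT b₁)*(aeval pT b₃)^2*(aeval pT (derivative b₃))) * z) * hz

set_option maxHeartbeats 1000000 in
lemma riccati_atom (b₀ b₁ b₂ b₃ : Polynomial ℂ) (z : LaurentSeries ℂ)
    (h : SolvesRiccati b₀ b₁ b₂ b₃ z) :
    (aeval pT b₃ * ((4:LaurentSeries ℂ)*(aeval pT b₃)*(aeval pT b₁)^3 + (4:LaurentSeries ℂ)*(aeval pT b₂)^3*(aeval pT b₀) + (27:LaurentSeries ℂ)*(aeval pT b₃)^2*(aeval pT b₀)^2 - (aeval pT b₂)^2*(aeval pT b₁)^2 - (18:LaurentSeries ℂ)*(aeval pT b₃)*(aeval pT b₂)*(aeval pT b₁)*(aeval pT b₀))) * tDeriv6 z =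
      ((aeval pT b₁)*(aeval pT b₂)^2*(aeval pT b₃)*(aeval pT (derivative b₀)) + (-4:LaurentSeries ℂ)*(aeval pT b₁)^2*(aeval pT b₃)^2*(aeval pT (derivative b₀)) + (3:LaurentSeries ℂ)*(aeval pT b₀)*(aeval pT b₂)*(aeval pT b₃)^2*(aeval pT (derivative b₀)) + (-2:LaurentSeries ℂ)*(aeval pT b₀)*(aeval pT b₂)^2*(aeval pT b₃)*(aeval pT (derivative b₁)) + (6:LaurentSeries ℂ)*(aeval pT b₀)*(aeval pT b₁)*(aeval pT b₃)^2*(aeval pT (derivative b₁)) + (aeval pT b₀)*(aeval pT b₁)*(aeval pT b₂)*(aeval pT b₃)*(aeval pT (derivative b₂)) + (-2:LaurentSeries ℂ)*(aeval pT b₀)*(aeval pT b₁)^2*(aeval pT b₃)*(aeval pT (derivative b₃)) + (-9:LaurentSeries ℂ)*(aeval pT b₀)^2*(aeval pT b₃)^2*(aeval pT (derivative b₂)) + (6:LaurentSeries ℂ)*(aeval pT b₀)^2*(aeval pT b₂)*(aeval pT b₃)*(aeval pT (derivative b₃))) + ((2:LaurentSeries ℂ)*(aeval pT b₂)^3*(aeval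 pT b₃)*(aeval pT (derivative b₀)) + (-7:LaurentSeries ℂ)*(aeval pT b₁)*(aeval pT b₂)*(aeval pT b₃)^2*(aeval pT (derivative b₀)) + (-1:LaurentSeries ℂ)*(aeval pT b₁)*(aeval pT b₂)^2*(aeval pT b₃)*(aeval pT (derivative b₁)) + (2:LaurentSeries ℂ)*(aeval pT b₁)^2*(aeval pT b₃)^2*(aeval pT (derivative b₁)) + (aeval pT b₁)^2*(aeval pT b₂)*(aeval pT b₃)*(aeval pT (derivative b₂)) + (-2:LaurentSeries ℂ)*(aeval pT b₁)^3*(aeval pT b₃)*(aeval pT (derivative b₃)) + (9:LaurentSeries ℂ)*(aeval pT b₀)*(aeval pT b₃)^3*(aeval pT (derivative b₀)) + (3:LaurentSeries ℂ)*(aeval pT b₀)*(aeval pT b₂)*(aeval pT b₃)^2*(aeval pT (derivative b₁)) + (-2:LaurentSeries ℂ)*(aeval pT b₀)*(aeval pT b₂)^2*(aeval pT b₃)*(aeval pT (derivative b₂)) + (-3:LaurentSeries ℂ)*(aeval pT b₀)*(aeval pT b₁)*(aeval pT b₃)^2*(aeval pT (derivative b₂)) + (7:LaurentSeries ℂ)*(aeval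 pT b₀)*(aeval pT b₁)*(aeval pT b₂)*(aeval pT b₃)*(aeval pT (derivative b₃)) + (-9:LaurentSeries ℂ)*(aeval pT b₀)^2*(aeval pT b₃)^2*(aeval pT (derivative b₃))) * z + (aeval pT b₃ * ((2:LaurentSeries ℂ)*(aeval pT b₂)^2*(aeval pT b₃)*(aeval pT (derivative b₀)) + (-6:LaurentSeries ℂ)*(aeval pT b₁)*(aeval pT b₃)^2*(aeval pT (derivative b₀)) + (-1:LaurentSeries ℂ)*(aeval pT b₁)*(aeval pT b₂)*(aeval pT b₃)*(aeval pT (derivative b₁)) + (2:LaurentSeries ℂ)*(aeval pT b₁)^2*(aeval pT b₃)*(aeval pT (derivative b₂)) + (-1:LaurentSeries ℂ)*(aeval pT b₁)^2*(aeval pT b₂)*(aeval pT (derivative b₃)) + (9:LaurentSeries ℂ)*(aeval pT b₀)*(aeval pT b₃)^2*(aeval pT (derivative b₁)) + (-6:LaurentSeries ℂ)*(aeval pT b₀)*(aeval pT b₂)*(aeval pT b₃)*(aeval pT (derivative b₂)) + (4:LaurentSeries ℂ)*(aeval pT b₀)*(aeval pT b₂)^2*(aeval pT (derivative b₃)) +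 (-3:LaurentSeries ℂ)*(aeval pT b₀)*(aeval pT b₁)*(aeval pT b₃)*(aeval pT (derivative b₃)))) * z ^ 2 := by
  unfold SolvesRiccati at h
  simp only [Matrix.det_fin_three, Matrix.of_apply, Matrix.cons_val', Matrix.cons_val_zero,
    Matrix.cons_val_one, Matrix.head_cons, Matrix.empty_val', Matrix.cons_val_fin_one,
    Matrix.head_fin_const, Matrix.cons_val_two, Matrix.tail_cons, map_add, map_sub, map_mul,
    map_pow, map_neg, map_ofNat, map_one] at h
  linear_combination h

lemma deriv_cross (D A B C z₁ z₂ z₃ z₄ : LaurentSeries ℂ)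
    (h₁ : D * tDeriv6 z₁ = A + B * z₁ + C * z₁ ^ 2)
    (h₂ : D * tDeriv6 z₂ = A + B * z₂ + C * z₂ ^ 2)
    (h₃ : D * tDeriv6 z₃ = A + B * z₃ + C * z₃ ^ 2)
    (h₄ : D * tDeriv6 z₄ = A + B * z₄ + C * z₄ ^ 2) :
    D * (tDeriv6 ((z₁ - z₃) * (z₂ - z₄)) * ((z₂ - z₃) * (z₁ - z₄))
      - ((z₁ - z₃) * (z₂ - z₄)) * tDeriv6 ((z₂ - z₃) * (z₁ - z₄))) = 0 := by
  have e₁ : tDeriv6 ((z₁ - z₃) * (z₂ - z₄))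
      = (tDeriv6 z₁ - tDeriv6 z₃) * (z₂ - z₄) + (z₁ - z₃) * (tDeriv6 z₂ - tDeriv6 z₄) := by
    rw [tDeriv6_mul, tDeriv6_sub, tDeriv6_sub]
  have e₂ : tDeriv6 ((z₂ - z₃) * (z₁ - z₄))
      = (tDeriv6 z₂ - tDeriv6 z₃) * (z₁ - z₄) + (z₂ - z₃) * (tDeriv6 z₁ - tDeriv6 z₄) := by
    rw [tDeriv6_mul, tDeriv6_sub, tDeriv6_sub]
  rw [e₁, e₂]
  linear_combination ((z₂ - z₄) * ((z₂ - z₃) * (z₁ - z₄)) - ((z₁ - z₃) * (z₂ - z₄)) * (z₂ - z₃)) * h₁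
    + ((z₁ - z₃) * ((z₂ - z₃) * (z₁ - z₄)) - ((z₁ - z₃) * (z₂ - z₄)) * (z₁ - z₄)) * h₂
    + (-((z₂ - z₄) * ((z₂ - z₃) * (z₁ - z₄))) + ((z₁ - z₃) * (z₂ - z₄)) * (z₁ - z₄)) * h₃
    + (-((z₁ - z₃) * ((z₂ - z₃) * (z₁ - z₄))) + ((z₁ - z₃) * (z₂ - z₄)) * (z₂ - z₃)) * h₄

lemma order_add_ge {f g : LaurentSeries ℂ} {t : ℤ} (ht : t ≤ 0)
    (hf : t ≤ f.order) (hg : t ≤ g.order) : t ≤ (f + g).order := by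
  by_cases h : f + g = 0
  · rw [h, HahnSeries.order_zero]; exact ht
  · exact le_trans (le_min hf hg) (HahnSeries.min_order_le_order_add h)

lemma order_sub_ge {f g : LaurentSeries ℂ} {t : ℤ} (ht : t ≤ 0)
    (hf : t ≤ f.order) (hg : t ≤ g.order) : t ≤ (f - g).order := by
  rw [sub_eq_add_neg]
  exact order_add_ge ht hf (by rwa [HahnSeries.order_neg])

lemma order_mul_ge {f g : LaurentSeries ℂ} {s t : ℤ} (hs : s ≤ 0) (ht : t ≤ 0)
    (hf : s ≤ f.order) (hg : t ≤ g.order) : s + t ≤ (f * g).order := by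
  by_cases hf0 : f = 0
  · rw [hf0, zero_mul, HahnSeries.order_zero]; omega
  by_cases hg0 : g = 0
  · rw [hg0, mul_zero, HahnSeries.order_zero]; omega
  rw [HahnSeries.order_mul hf0 hg0]
  omega

lemma order_sub_eq_left {f g : LaurentSeries ℂ} (h : f.order < g.order) (hf : f ≠ 0) :
    (f - g).order = f.order := by
  have hc : (f - g).coeff f.order ≠ 0 := by
    rw [HahnSeries.coeff_sub, HahnSeries.coeff_eq_zero_of_lt_order h, sub_zero]
    exact fun h0 => hf (HahnSeries.coeff_order_eq_zero.mp h0)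
  have h1 : (f - g).order ≤ f.order := HahnSeries.order_le_of_coeff_ne_zero hc
  have hne : f - g ≠ 0 := fun h0 => hc (by rw [h0]; simp)
  have h2 : f.order ≤ (f - g).order := by
    have hm := HahnSeries.min_order_le_order_add (x := f) (y := -g)
      (by rwa [← sub_eq_add_neg])
    rw [HahnSeries.order_neg, ← sub_eq_add_neg] at hm
    exact le_trans (le_min le_rfl h.le) hm
  exact le_antisymm h1 h2

set_option maxHeartbeats 1000000 in
/-- Let `x₁, x₂, x₃ ∈ ℂ[[t^{-1/6}]]` (modelled as Laurent series in `X = t^{-1/6}`) be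
three distinct solutions of a cubic `b₀ + b₁x + b₂x² + b₃x³ = 0` with polynomial
coefficients, with `deg x₁ ≥ 1` (i.e. order ≤ −6 in the `X`-grading) and
`deg x₂, deg x₃ ≤ 0` (order ≥ 0).  Then `x₁` solves the associated Riccati equation and
is its only solution of degree ≥ 1. -/
theorem riccati_unique_solution_of_positive_degree
    (b₀ b₁ b₂ b₃ : Polynomial ℂ) (hb₃ : b₃ ≠ 0)
    (x₁ x₂ x₃ : LaurentSeries ℂ)
    (hroot : ∀ z ∈ ({x₁, x₂, x₃} : Set (LaurentSeries ℂ)),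
      aeval pT b₀ + aeval pT b₁ * z + aeval pT b₂ * z ^ 2 + aeval pT b₃ * z ^ 3 = 0)
    (h12 : x₁ ≠ x₂) (h13 : x₁ ≠ x₃) (h23 : x₂ ≠ x₃)
    (hdeg1 : x₁.order ≤ -6) (hdeg2 : 0 ≤ x₂.order) (hdeg3 : 0 ≤ x₃.order) :
    SolvesRiccati b₀ b₁ b₂ b₃ x₁ ∧
      ∀ x : LaurentSeries ℂ, SolvesRiccati b₀ b₁ b₂ b₃ x → x.order ≤ -6 → x = x₁ := by
  have E₁ := hroot x₁ (by simp)
  have E₂ := hroot x₂ (by simp)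
  have E₃ := hroot x₃ (by simp)
  have h12' : x₁ - x₂ ≠ 0 := sub_ne_zero_of_ne h12
  have h13' : x₁ - x₃ ≠ 0 := sub_ne_zero_of_ne h13
  have h23' : x₂ - x₃ ≠ 0 := sub_ne_zero_of_ne h23
  have hb₃' : aeval pT b₃ ≠ 0 := aeval_pT_ne_zero hb₃
  -- Vieta
  have hF12 : aeval pT b₁ + aeval pT b₂ * (x₁ + x₂)
      + aeval pT b₃ * (x₁ ^ 2 + x₁ * x₂ + x₂ ^ 2) = 0 := by
    apply mul_left_cancel₀ h12'
    rw [mul_zero]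
    linear_combination E₁ - E₂
  have hF13 : aeval pT b₁ + aeval pT b₂ * (x₁ + x₃)
      + aeval pT b₃ * (x₁ ^ 2 + x₁ * x₃ + x₃ ^ 2) = 0 := by
    apply mul_left_cancel₀ h13'
    rw [mul_zero]
    linear_combination E₁ - E₃
  have hG : aeval pT b₂ + aeval pT b₃ * (x₁ + x₂ + x₃) = 0 := by
    apply mul_left_cancel₀ h23'
    rw [mul_zero]
    linear_combination hF12 - hF13
  have hA2 : aeval pT b₂ = -(aeval pT b₃) * (x₁ + x₂ + x₃) := by linear_combination hG
  have hA1 : aeval pT b₁ = aeval pT b₃ * (x₁ * x₂ + x₁ * x₃ + x₂ * x₃) := by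
    linear_combination hF12 - (x₁ + x₂) * hG
  have hA0 : aeval pT b₀ = -(aeval pT b₃) * (x₁ * x₂ * x₃) := by
    linear_combination E₁ - x₁ * hA1 - x₁ ^ 2 * hG
  -- U values at the roots
  have hU₁ : aeval pT b₁ + 2 * aeval pT b₂ * x₁ + 3 * aeval pT b₃ * x₁ ^ 2
      = aeval pT b₃ * ((x₁ - x₂) * (x₁ - x₃)) := by rw [hA1, hA2]; ring
  have hU₂ : aeval pT b₁ + 2 * aeval pT b₂ * x₂ + 3 * aeval pT b₃ * x₂ ^ 2
      = aeval pT b₃ * (-(x₁ - x₂) * (x₂ - x₃)) := by rw [hA1, hA2]; ring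
  have hU₃ : aeval pT b₁ + 2 * aeval pT b₂ * x₃ + 3 * aeval pT b₃ * x₃ ^ 2
      = aeval pT b₃ * ((x₁ - x₃) * (x₂ - x₃)) := by rw [hA1, hA2]; ring
  have hU₁' : aeval pT b₁ + 2 * aeval pT b₂ * x₁ + 3 * aeval pT b₃ * x₁ ^ 2 ≠ 0 := by
    rw [hU₁]; exact mul_ne_zero hb₃' (mul_ne_zero h12' h13')
  have hU₂' : aeval pT b₁ + 2 * aeval pT b₂ * x₂ + 3 * aeval pT b₃ * x₂ ^ 2 ≠ 0 := by
    rw [hU₂]; exact mul_ne_zero hb₃' (mul_ne_zero (neg_ne_zero.mpr h12') h23')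
  have hU₃' : aeval pT b₁ + 2 * aeval pT b₂ * x₃ + 3 * aeval pT b₃ * x₃ ^ 2 ≠ 0 := by
    rw [hU₃]; exact mul_ne_zero hb₃' (mul_ne_zero h13' h23')
  have hS₁ : SolvesRiccati b₀ b₁ b₂ b₃ x₁ := solves_of_root _ _ _ _ _ E₁ hU₁'
  have hS₂ : SolvesRiccati b₀ b₁ b₂ b₃ x₂ := solves_of_root _ _ _ _ _ E₂ hU₂'
  have hS₃ : SolvesRiccati b₀ b₁ b₂ b₃ x₃ := solves_of_root _ _ _ _ _ E₃ hU₃'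
  refine ⟨hS₁, ?_⟩
  intro x hSx hx
  by_contra hne
  have hx0 : x ≠ 0 := by
    intro h; rw [h, HahnSeries.order_zero] at hx; omega
  have hx₁0 : x₁ ≠ 0 := by
    intro h; rw [h, HahnSeries.order_zero] at hdeg1; omega
  have hxx₁ : x₁ - x ≠ 0 := sub_ne_zero_of_ne fun h => hne h.symm
  have hx2 : x₂ - x ≠ 0 := by
    intro h
    have h' := sub_eq_zero.mp h
    rw [← h'] at hx
    omega
  have R₁ := riccati_atom _ _ _ _ _ hS₁
  have R₂ := riccati_atom _ _ _ _ _ hS₂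
  have R₃ := riccati_atom _ _ _ _ _ hS₃
  have R₄ := riccati_atom _ _ _ _ _ hSx
  have hcross := deriv_cross _ _ _ _ x₁ x₂ x₃ x R₁ R₂ R₃ R₄
  have hPP : ((4:LaurentSeries ℂ)*(aeval pT b₃)*(aeval pT b₁)^3 + (4:LaurentSeries ℂ)*(aeval pT b₂)^3*(aeval pT b₀) + (27:LaurentSeries ℂ)*(aeval pT b₃)^2*(aeval pT b₀)^2 - (aeval pT b₂)^2*(aeval pT b₁)^2 - (18:LaurentSeries ℂ)*(aeval pT b₃)*(aeval pT b₂)*(aeval pT b₁)*(aeval pT b₀)) = -(aeval pT b₃) ^ 4 * ((x₁ - x₂) * (x₁ - x₃) * (x₂ - x₃)) ^ 2 := by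
    rw [hA0, hA1, hA2]; ring
  have hD : aeval pT b₃ * ((4:LaurentSeries ℂ)*(aeval pT b₃)*(aeval pT b₁)^3 + (4:LaurentSeries ℂ)*(aeval pT b₂)^3*(aeval pT b₀) + (27:LaurentSeries ℂ)*(aeval pT b₃)^2*(aeval pT b₀)^2 - (aeval pT b₂)^2*(aeval pT b₁)^2 - (18:LaurentSeries ℂ)*(aeval pT b₃)*(aeval pT b₂)*(aeval pT b₁)*(aeval pT b₀)) ≠ 0 := by
    rw [hPP]
    exact mul_ne_zero hb₃' (mul_ne_zero (neg_ne_zero.mpr (pow_ne_zero _ hb₃'))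
      (pow_ne_zero _ (mul_ne_zero (mul_ne_zero h12' h13') h23')))
  have hNM : tDeriv6 ((x₁ - x₃) * (x₂ - x)) * ((x₂ - x₃) * (x₁ - x))
      = ((x₁ - x₃) * (x₂ - x)) * tDeriv6 ((x₂ - x₃) * (x₁ - x)) := by
    have h0 := (mul_eq_zero.mp hcross).resolve_left hD
    exact sub_eq_zero.mp h0
  have hM0 : (x₂ - x₃) * (x₁ - x) ≠ 0 := mul_ne_zero h23' hxx₁
  have hN0 : (x₁ - x₃) * (x₂ - x) ≠ 0 := mul_ne_zero h13' hx2
  set K := ((x₁ - x₃) * (x₂ - x)) * ((x₂ - x₃) * (x₁ - x))⁻¹ with hKdef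
  have hKM : K * ((x₂ - x₃) * (x₁ - x)) = (x₁ - x₃) * (x₂ - x) := by
    rw [hKdef]
    field_simp
  have hN' : tDeriv6 ((x₁ - x₃) * (x₂ - x))
      = tDeriv6 K * ((x₂ - x₃) * (x₁ - x)) + K * tDeriv6 ((x₂ - x₃) * (x₁ - x)) := by
    rw [← hKM]
    exact tDeriv6_mul _ _
  have hK' : tDeriv6 K * (((x₂ - x₃) * (x₁ - x)) * ((x₂ - x₃) * (x₁ - x))) = 0 := by
    linear_combination hNM - ((x₂ - x₃) * (x₁ - x)) * hN'
      - tDeriv6 ((x₂ - x₃) * (x₁ - x)) * hKM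
  have hK0 : tDeriv6 K = 0 := (mul_eq_zero.mp hK').resolve_right (mul_ne_zero hM0 hM0)
  have hKc := tDeriv6_eq_zero hK0
  have hKne : K ≠ 0 := by
    intro h
    rw [h, zero_mul] at hKM
    exact hN0 hKM.symm
  have hc0 : K.coeff 0 ≠ 0 := by
    intro h
    apply hKne
    rw [hKc, h, HahnSeries.single_eq_zero]
  have hkM : HahnSeries.single (0 : ℤ) (K.coeff 0) * ((x₂ - x₃) * (x₁ - x))
      = (x₁ - x₃) * (x₂ - x) := by rw [← hKc]; exact hKM
  set k : LaurentSeries ℂ := HahnSeries.single (0 : ℤ) (K.coeff 0) with hkdef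
  have hkord : k.order = 0 := HahnSeries.order_single hc0
  have hxden : x * (x₁ - (x₃ + k * (x₂ - x₃))) = x₁ * (x₂ - k * (x₂ - x₃)) - x₂ * x₃ := by
    linear_combination hkM
  have hprod_ord : (0:ℤ) ≤ (k * (x₂ - x₃)).order := by
    have := order_mul_ge (le_refl (0:ℤ)) (le_refl (0:ℤ)) (le_of_eq hkord.symm)
      (order_sub_ge le_rfl hdeg2 hdeg3)
    simpa using this
  have hs_ord : (0:ℤ) ≤ (x₃ + k * (x₂ - x₃)).order := order_add_ge le_rfl hdeg3 hprod_ord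
  have hden0 : x₁ - (x₃ + k * (x₂ - x₃)) ≠ 0 := by
    intro h
    have h' := sub_eq_zero.mp h
    rw [← h'] at hs_ord
    omega
  have hden_ord : (x₁ - (x₃ + k * (x₂ - x₃))).order = x₁.order :=
    order_sub_eq_left (by omega) hx₁0
  have hnum_hi : (x₁ * (x₂ - k * (x₂ - x₃)) - x₂ * x₃).order = x.order + x₁.order := by
    rw [← hxden, HahnSeries.order_mul hx0 hden0, hden_ord]
  have hc₂ord : x₁.order ≤ (x₁ * (x₂ - k * (x₂ - x₃))).order := by
    by_cases hc₂ : x₂ - k * (x₂ - x₃) = 0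
    · rw [hc₂, mul_zero, HahnSeries.order_zero]; omega
    · rw [HahnSeries.order_mul hx₁0 hc₂]
      have : (0:ℤ) ≤ (x₂ - k * (x₂ - x₃)).order := order_sub_ge le_rfl hdeg2 hprod_ord
      omega
  have hx₂x₃ord : x₁.order ≤ (x₂ * x₃).order := by
    have := order_mul_ge (le_refl (0:ℤ)) (le_refl (0:ℤ)) hdeg2 hdeg3
    simp only [add_zero] at this
    omega
  have hnum_lo : x₁.order ≤ (x₁ * (x₂ - k * (x₂ - x₃)) - x₂ * x₃).order :=
    order_sub_ge (by omega) hc₂ord hx₂x₃ord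
  omega
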